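/- Let f : ℝⁿ → ℝ be twice continuously differentiable with Hessian Lipschitz continuous with constant L (in operator norm), let x ∈ ℝⁿ, and suppose H = ∇²f(x) is invertible. Let y¹, …, yᵖ ∈ ℝⁿ with p ≥ n, set zˡ = H(yˡ − x) for ℓ = 1, …, p, and Δ_y = max_{1 ≤ ℓ ≤ p} ‖yˡ − x‖, assumed positive. Let M_L^y be the p×n matrix whose ℓ-th row is (1/Δ_y)(yˡ − x)ᵀ, suppose H (M_L^y)ᵀ (M_L^y) H is invertible, and define R_y = ( H (M_L^y)ᵀ (M_L^y) H )⁻¹ H (M_L^y)ᵀ. If dᴺ ∈ ℝⁿ satisfies the Newton-direction interpolating conditions (zˡ)ᵀ dᴺ = −f(yˡ) + f(x) + ½ (yˡ − x)ᵀ zˡ for all ℓ = 1, …, p, then ‖ −H⁻¹ ∇f(x) − dᴺ ‖ ≤ ‖R_y‖ · √p · (L/6) · Δ_y². -/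

import Mathlib

open scoped Matrix RealInnerProductSpace Matrix.Norms.L2Operator


lemma vec_taylor_aux {E : Type*} [NormedAddCommGroup E] [NormedSpace ℝ E] [CompleteSpace E]
    (g : E → E) (A : E → E →L[ℝ] E) (L : ℝ) (hL : 0 ≤ L)
    (hA : ∀ u, HasFDerivAt g (A u) u)
    (hLip : ∀ u v, ‖A u - A v‖ ≤ L * ‖u - v‖)
    (x s : E) : ‖g (x + s) - g x - A x s‖ ≤ L / 2 * ‖s‖ ^ 2 := by
  set D : ℝ → E := fun t => A (x + t • s) s - A x s with hD
  have hline : ∀ t : ℝ, HasDerivAt (fun t : ℝ => x + t • s) s t := by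
    intro t
    simpa using ((hasDerivAt_id t).smul_const s).const_add x
  have hψ : ∀ t : ℝ, HasDerivAt (fun t => g (x + t • s) - t • (A x s)) (D t) t := by
    intro t
    have h2 := (hA (x + t • s)).comp_hasDerivAt t (hline t)
    have h3 : HasDerivAt (fun t : ℝ => t • (A x s)) (A x s) t := by
      simpa using (hasDerivAt_id t).smul_const (A x s)
    exact h2.sub h3
  have hLipA : LipschitzWith L.toNNReal A := by
    apply LipschitzWith.of_dist_le_mul
    intro u v
    simpa [dist_eq_norm, Real.coe_toNNReal L hL] using hLip u v
  have hcont : Continuous D := by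
    have h1 : Continuous fun t : ℝ => x + t • s := by continuity
    have h2 : Continuous fun t : ℝ => A (x + t • s) := hLipA.continuous.comp h1
    exact (h2.clm_apply continuous_const).sub continuous_const
  have key := intervalIntegral.integral_eq_sub_of_hasDerivAt
    (fun t (_ : t ∈ Set.uIcc (0:ℝ) 1) => hψ t) (hcont.intervalIntegrable 0 1)
  have hval : g (x + s) - g x - A x s = ∫ t in (0:ℝ)..1, D t := by
    rw [key]; simp; abel
  rw [hval]
  have hgint : IntervalIntegrable (fun t => L * ‖s‖ ^ 2 * t) MeasureTheory.volume 0 1 :=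
    (continuous_const.mul continuous_id).intervalIntegrable 0 1
  have hbound := intervalIntegral.norm_integral_le_abs_of_norm_le
    (f := D) (g := fun t => L * ‖s‖ ^ 2 * t) (μ := MeasureTheory.volume) (a := 0) (b := 1) ?_ hgint
  · refine hbound.trans ?_
    have : (∫ t in (0:ℝ)..1, L * ‖s‖ ^ 2 * t) = L / 2 * ‖s‖ ^ 2 := by
      rw [intervalIntegral.integral_const_mul, integral_id]; ring
    rw [this, abs_of_nonneg (by positivity)]
  · rw [MeasureTheory.ae_restrict_iff' measurableSet_uIoc]
    refine MeasureTheory.ae_of_all _ fun t ht => ?_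
    rw [Set.uIoc_of_le zero_le_one] at ht
    have h1 : ‖D t‖ ≤ ‖A (x + t • s) - A x‖ * ‖s‖ := by
      simpa [hD] using (A (x + t • s) - A x).le_opNorm s
    have h2 : ‖A (x + t • s) - A x‖ ≤ L * (t * ‖s‖) := by
      have := hLip (x + t • s) x
      simpa [norm_smul, abs_of_pos ht.1] using this
    calc ‖D t‖ ≤ (L * (t * ‖s‖)) * ‖s‖ :=
        h1.trans (mul_le_mul_of_nonneg_right h2 (norm_nonneg s))
      _ = L * ‖s‖ ^ 2 * t := by ring

lemma scalar_taylor_aux {E : Type*} [NormedAddCommGroup E] [InnerProductSpace ℝ E]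
    [CompleteSpace E]
    (f : E → ℝ) (g : E → E) (A : E → E →L[ℝ] E) (L : ℝ) (hL : 0 ≤ L)
    (hg : ∀ u, HasGradientAt f (g u) u)
    (hA : ∀ u, HasFDerivAt g (A u) u)
    (hLip : ∀ u v, ‖A u - A v‖ ≤ L * ‖u - v‖)
    (x s : E) :
    |f (x + s) - f x - ⟪g x, s⟫ - 1 / 2 * ⟪A x s, s⟫| ≤ L / 6 * ‖s‖ ^ 3 := by
  set D : ℝ → ℝ := fun t => ⟪g (x + t • s), s⟫ - ⟪g x, s⟫ - t * ⟪A x s, s⟫ with hD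
  have hline : ∀ t : ℝ, HasDerivAt (fun t : ℝ => x + t • s) s t := by
    intro t
    simpa using ((hasDerivAt_id t).smul_const s).const_add x
  have hφ : ∀ t : ℝ, HasDerivAt
      (fun t => f (x + t • s) - t * ⟪g x, s⟫ - t ^ 2 / 2 * ⟪A x s, s⟫) (D t) t := by
    intro t
    have h1 : HasDerivAt (fun t : ℝ => f (x + t • s)) ⟪g (x + t • s), s⟫ t := by
      have := ((hg (x + t • s)).hasFDerivAt).comp_hasDerivAt t (hline t)
      simpa [Function.comp_def] using this
    have h2 : HasDerivAt (fun t : ℝ => t * ⟪g x, s⟫) ⟪g x, s⟫ t := by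
      simpa using (hasDerivAt_id t).mul_const (⟪g x, s⟫)
    have h3 : HasDerivAt (fun t : ℝ => t ^ 2 / 2 * ⟪A x s, s⟫) (t * ⟪A x s, s⟫) t := by
      have := ((hasDerivAt_pow 2 t).div_const 2).mul_const (⟪A x s, s⟫)
      simpa using this
    exact (h1.sub h2).sub h3
  have hgcont : Continuous g := by
    rw [continuous_iff_continuousAt]
    exact fun u => (hA u).differentiableAt.continuousAt
  have hcont : Continuous D := by
    have h1 : Continuous fun t : ℝ => x + t • s := by continuity
    exact (((hgcont.comp h1).inner continuous_const).sub continuous_const).sub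
      (continuous_id.mul continuous_const)
  have key := intervalIntegral.integral_eq_sub_of_hasDerivAt
    (fun t (_ : t ∈ Set.uIcc (0:ℝ) 1) => hφ t) (hcont.intervalIntegrable 0 1)
  have hval : f (x + s) - f x - ⟪g x, s⟫ - 1 / 2 * ⟪A x s, s⟫ = ∫ t in (0:ℝ)..1, D t := by
    rw [key]; simp; ring
  rw [hval]
  have hgint : IntervalIntegrable (fun t => L / 2 * ‖s‖ ^ 3 * t ^ 2) MeasureTheory.volume 0 1 :=
    (continuous_const.mul (continuous_pow 2)).intervalIntegrable 0 1
  have hbound := intervalIntegral.norm_integral_le_abs_of_norm_le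
    (f := D) (g := fun t => L / 2 * ‖s‖ ^ 3 * t ^ 2) (μ := MeasureTheory.volume)
    (a := 0) (b := 1) ?_ hgint
  · rw [Real.norm_eq_abs] at hbound
    refine hbound.trans ?_
    have : (∫ t in (0:ℝ)..1, L / 2 * ‖s‖ ^ 3 * t ^ 2) = L / 6 * ‖s‖ ^ 3 := by
      rw [intervalIntegral.integral_const_mul, integral_pow]; push_cast; ring
    rw [this, abs_of_nonneg (by positivity)]
  · rw [MeasureTheory.ae_restrict_iff' measurableSet_uIoc]
    refine MeasureTheory.ae_of_all _ fun t ht => ?_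
    rw [Set.uIoc_of_le zero_le_one] at ht
    have hDt : D t = ⟪g (x + t • s) - g x - A x (t • s), s⟫ := by
      simp [hD, inner_sub_left, real_inner_smul_left, map_smul]
    rw [Real.norm_eq_abs, hDt]
    have h1 := abs_real_inner_le_norm (g (x + t • s) - g x - A x (t • s)) s
    have h2 := vec_taylor_aux g A L hL hA hLip x (t • s)
    have h3 : ‖t • s‖ ^ 2 = t ^ 2 * ‖s‖ ^ 2 := by
      rw [norm_smul, Real.norm_eq_abs, mul_pow, sq_abs]
    calc |⟪g (x + t • s) - g x - A x (t • s), s⟫| ≤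
        ‖g (x + t • s) - g x - A x (t • s)‖ * ‖s‖ := h1
      _ ≤ (L / 2 * ‖t • s‖ ^ 2) * ‖s‖ :=
        mul_le_mul_of_nonneg_right h2 (norm_nonneg s)
      _ = L / 2 * ‖s‖ ^ 3 * t ^ 2 := by rw [h3]; ring

/-- Corollary 3.1 of the paper with explicit constants: error bound for the recovered Newton
direction in terms of `‖R_y‖` and `Δ_y²`. -/
theorem newton_direction_recovery_error_bound_Ry
    {n p : ℕ} (hpn : p ≥ n)
    (f : EuclideanSpace ℝ (Fin n) → ℝ)
    (g : EuclideanSpace ℝ (Fin n) → EuclideanSpace ℝ (Fin n))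
    (hessM : EuclideanSpace ℝ (Fin n) → Matrix (Fin n) (Fin n) ℝ)
    (L : ℝ)
    (hg : ∀ u, HasGradientAt f (g u) u)
    (hhess : ∀ u, HasFDerivAt g (Matrix.toEuclideanCLM (𝕜 := ℝ) (hessM u)) u)
    (hLip : ∀ u v, ‖Matrix.toEuclideanCLM (𝕜 := ℝ) (hessM u) -
      Matrix.toEuclideanCLM (𝕜 := ℝ) (hessM v)‖ ≤ L * ‖u - v‖)
    (x : EuclideanSpace ℝ (Fin n)) (hHinv : IsUnit (hessM x))
    (y : Fin p → EuclideanSpace ℝ (Fin n))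
    (z : Fin p → EuclideanSpace ℝ (Fin n)) (hz : ∀ ℓ, z ℓ = (hessM x).mulVec (y ℓ - x))
    (Δy : ℝ) (hΔy : IsGreatest (Set.range fun ℓ => ‖y ℓ - x‖) Δy) (hΔypos : 0 < Δy)
    (My : Matrix (Fin p) (Fin n) ℝ) (hMy : ∀ ℓ i, My ℓ i = (1 / Δy) * (y ℓ - x) i)
    (hGram : IsUnit (hessM x * Myᵀ * My * hessM x))
    (Ry : Matrix (Fin n) (Fin p) ℝ)
    (hRy : Ry = (hessM x * Myᵀ * My * hessM x)⁻¹ * (hessM x * Myᵀ))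
    (dN : EuclideanSpace ℝ (Fin n))
    (hdN : ∀ ℓ : Fin p, ⟪z ℓ, dN⟫ = -f (y ℓ) + f x + (1 / 2) * ⟪y ℓ - x, z ℓ⟫) :
    ‖(WithLp.equiv 2 (Fin n → ℝ)).symm (-(hessM x)⁻¹.mulVec (g x)) - dN‖ ≤
      ‖Ry‖ * Real.sqrt p * (L / 6) * Δy ^ 2 := by
  classical
  set A : EuclideanSpace ℝ (Fin n) → EuclideanSpace ℝ (Fin n) →L[ℝ] EuclideanSpace ℝ (Fin n) :=
    fun u => Matrix.toEuclideanCLM (𝕜 := ℝ) (hessM u) with hAdef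
  obtain ⟨ℓ₀, hℓ₀⟩ := hΔy.1
  simp only at hℓ₀
  have hL : 0 ≤ L := by
    have h1 : (0:ℝ) ≤ L * ‖y ℓ₀ - x‖ := le_trans (norm_nonneg _) (hLip (y ℓ₀) x)
    rw [hℓ₀] at h1
    nlinarith
  have hΔub : ∀ ℓ, ‖y ℓ - x‖ ≤ Δy := fun ℓ => hΔy.2 ⟨ℓ, rfl⟩
  -- symmetry of the Hessian as a bilinear form
  have hsym : ∀ v w : EuclideanSpace ℝ (Fin n), ⟪A x v, w⟫ = ⟪A x w, v⟫ := by
    set T : EuclideanSpace ℝ (Fin n) →L[ℝ] (EuclideanSpace ℝ (Fin n) →L[ℝ] ℝ) :=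
      ((InnerProductSpace.toDual ℝ (EuclideanSpace ℝ (Fin n))).toContinuousLinearEquiv :
        EuclideanSpace ℝ (Fin n) ≃L[ℝ] _).toContinuousLinearMap with hTdef
    have hf' : ∀ u, HasFDerivAt f (T (g u)) u := by
      intro u
      have := (hg u).hasFDerivAt
      exact this
    have hT : HasFDerivAt (fun u => T (g u)) (T.comp (A x)) x :=
      T.hasFDerivAt.comp x (hhess x)
    intro v w
    have hs := second_derivative_symmetric hf' hT v w
    have hv : ∀ a b : EuclideanSpace ℝ (Fin n), T a b = ⟪a, b⟫ := fun a b => rfl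
    calc ⟪A x v, w⟫ = T.comp (A x) v w := (hv _ _).symm
      _ = T.comp (A x) w v := hs
      _ = ⟪A x w, v⟫ := hv _ _
  -- bridging lemmas
  have hAcoord : ∀ (v : EuclideanSpace ℝ (Fin n)) (i : Fin n),
      (A x v) i = (hessM x *ᵥ (fun j => v j)) i := fun v i =>
    congrFun (Matrix.ofLp_toEuclideanCLM (n := Fin n) (𝕜 := ℝ) (hessM x) v) i
  have hinner : ∀ a b : EuclideanSpace ℝ (Fin n),
      ⟪a, b⟫ = (fun i => a i) ⬝ᵥ (fun i => b i) := fun a b => by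
    simp [PiLp.inner_apply, dotProduct, RCLike.inner_apply, mul_comm]
  have hAz : ∀ ℓ, A x (y ℓ - x) = z ℓ := by
    intro ℓ
    ext i
    rw [hz ℓ, hAcoord]
    rfl
  -- residual vector
  set r : Fin p → ℝ :=
    fun ℓ => f (y ℓ) - f x - ⟪g x, y ℓ - x⟫ - 1 / 2 * ⟪A x (y ℓ - x), y ℓ - x⟫ with hrdef
  have hrbound : ∀ ℓ, |r ℓ| ≤ L / 6 * Δy ^ 3 := by
    intro ℓ
    have h1 := scalar_taylor_aux f g A L hL hg hhess hLip x (y ℓ - x)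
    rw [add_sub_cancel] at h1
    refine h1.trans ?_
    have h2 : ‖y ℓ - x‖ ^ 3 ≤ Δy ^ 3 := pow_le_pow_left₀ (norm_nonneg _) (hΔub ℓ) 3
    have hL6 : 0 ≤ L / 6 := by linarith
    exact mul_le_mul_of_nonneg_left h2 hL6
  -- error vector in coordinates
  set e : Fin n → ℝ := -((hessM x)⁻¹ *ᵥ g x) - (fun i => dN i) with hedef
  have hHH : hessM x *ᵥ ((hessM x)⁻¹ *ᵥ g x) = (fun i => g x i) := by
    rw [Matrix.mulVec_mulVec, Matrix.mul_nonsing_inv _ ((Matrix.isUnit_iff_isUnit_det _).mp hHinv),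
      Matrix.one_mulVec]
  have hHe : hessM x *ᵥ e = -(fun i => g x i) - (hessM x *ᵥ fun i => dN i) := by
    rw [hedef, Matrix.mulVec_sub, Matrix.mulVec_neg, hHH]
  -- key identity: sℓ ⬝ᵥ (H *ᵥ e) = r ℓ
  have key : ∀ ℓ, (fun i => (y ℓ - x) i) ⬝ᵥ (hessM x *ᵥ e) = r ℓ := by
    intro ℓ
    rw [hHe, dotProduct_sub, dotProduct_neg]
    have t1 : (fun i => (y ℓ - x) i) ⬝ᵥ (fun i => g x i) = ⟪g x, y ℓ - x⟫ := by
      rw [real_inner_comm, hinner]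
    have t2 : (fun i => (y ℓ - x) i) ⬝ᵥ (hessM x *ᵥ fun i => dN i) = ⟪z ℓ, dN⟫ := by
      have hcv : (fun i => (A x dN) i) = hessM x *ᵥ (fun i => dN i) := funext (hAcoord dN)
      rw [← hcv, ← hinner, real_inner_comm, hsym, hAz]
    have t3 : ⟪y ℓ - x, z ℓ⟫ = ⟪A x (y ℓ - x), y ℓ - x⟫ := by
      rw [← hAz ℓ, real_inner_comm]
    rw [t1, t2, hdN ℓ, t3, hrdef]
    ring
  -- matrix form
  have hMHe : (My * hessM x) *ᵥ e = fun ℓ => (1 / Δy) * r ℓ := by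
    funext ℓ
    rw [← Matrix.mulVec_mulVec]
    show My ℓ ⬝ᵥ (hessM x *ᵥ e) = _
    have hrow : My ℓ = fun i => (1 / Δy) * (y ℓ - x) i := funext (hMy ℓ)
    rw [hrow]
    have : (fun i => (1 / Δy) * (y ℓ - x) i) ⬝ᵥ (hessM x *ᵥ e)
        = (1 / Δy) * ((fun i => (y ℓ - x) i) ⬝ᵥ (hessM x *ᵥ e)) := by
      simp [dotProduct, Finset.mul_sum, mul_assoc]
    rw [this, key ℓ]
  have hid : Ry * (My * hessM x) = 1 := by
    rw [hRy, Matrix.mul_assoc]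
    have : hessM x * Myᵀ * (My * hessM x) = hessM x * Myᵀ * My * hessM x := by
      rw [Matrix.mul_assoc (hessM x * Myᵀ) My (hessM x), Matrix.mul_assoc]
    rw [this, Matrix.nonsing_inv_mul _ ((Matrix.isUnit_iff_isUnit_det _).mp hGram)]
  have he : e = Ry *ᵥ (fun ℓ => (1 / Δy) * r ℓ) := by
    rw [← hMHe, Matrix.mulVec_mulVec, hid, Matrix.one_mulVec]
  -- rewrite the LHS
  set w : EuclideanSpace ℝ (Fin p) :=
    (WithLp.equiv 2 (Fin p → ℝ)).symm (fun ℓ => (1 / Δy) * r ℓ) with hwdef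
  have hLHS : (WithLp.equiv 2 (Fin n → ℝ)).symm (-(hessM x)⁻¹.mulVec (g x)) - dN
      = (EuclideanSpace.equiv (Fin n) ℝ).symm (Ry *ᵥ w) := by
    ext i
    have h1 : ((WithLp.equiv 2 (Fin n → ℝ)).symm (-(hessM x)⁻¹.mulVec (g x)) - dN) i
        = e i := by
      simp [hedef, Matrix.mulVec_neg]
    rw [h1]
    show e i = (Ry *ᵥ w) i
    rw [he]
    rfl
  rw [hLHS]
  have hnorm1 := Matrix.l2_opNorm_mulVec Ry w
  refine hnorm1.trans ?_
  -- bound ‖w‖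
  have hC : (0:ℝ) ≤ 1 / Δy * (L / 6 * Δy ^ 3) := by positivity
  have hwb : ∀ ℓ, |(1 / Δy) * r ℓ| ≤ 1 / Δy * (L / 6 * Δy ^ 3) := by
    intro ℓ
    rw [abs_mul, abs_of_pos (by positivity : (0:ℝ) < 1 / Δy)]
    exact mul_le_mul_of_nonneg_left (hrbound ℓ) (by positivity)
  have hwn : ‖w‖ ≤ Real.sqrt p * (1 / Δy * (L / 6 * Δy ^ 3)) := by
    rw [hwdef, EuclideanSpace.norm_eq]
    have h1 : ∑ i, ‖(WithLp.equiv 2 (Fin p → ℝ)).symm (fun ℓ => (1 / Δy) * r ℓ) i‖ ^ 2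
        ≤ ∑ _i : Fin p, (1 / Δy * (L / 6 * Δy ^ 3)) ^ 2 := by
      apply Finset.sum_le_sum
      intro i _
      simp only [WithLp.equiv_symm_apply, PiLp.toLp_apply, Real.norm_eq_abs]
      exact pow_le_pow_left₀ (abs_nonneg _) (hwb i) 2
    refine (Real.sqrt_le_sqrt h1).trans ?_
    rw [Finset.sum_const, Finset.card_univ, Fintype.card_fin, nsmul_eq_mul,
      Real.sqrt_mul (by positivity), Real.sqrt_sq hC]
  calc ‖Ry‖ * ‖w‖ ≤ ‖Ry‖ * (Real.sqrt p * (1 / Δy * (L / 6 * Δy ^ 3))) :=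
      mul_le_mul_of_nonneg_left hwn (norm_nonneg _)
    _ = ‖Ry‖ * Real.sqrt p * (L / 6) * Δy ^ 2 := by
      field_simp
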